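/- Let φ : B_b(S) → ℝ be a monetary risk measure on a metric space S with concentration function J, minimal rate function I_min, and let I : S → [0, +∞] be lower semicontinuous. If J_A ≤ −inf_{x ∈ A} I(x) for every closed set A ⊆ S, then I_min ≥ I. If −inf_{x ∈ A} I(x) ≤ J_A for every open set A ⊆ S, then I_min ≤ I. In particular, if φ satisfies the large deviation principle with rate function I, then I = I_min. -/

import Mathlib

open MeasureTheory Set Metric Filter Topology

noncomputable section

/-- The bounded Borel measurable functions on `S`. -/
def Bb (S : Type*) [MeasurableSpace S] : Set (S → ℝ) :=
  {f | Measurable f ∧ ∃ C : ℝ, ∀ x, |f x| ≤ C}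

/-- `φ` is a monetary risk measure on the class of functions `X`:
normalization, translation property and monotonicity. -/
def Monetary {S : Type*} (X : Set (S → ℝ)) (φ : (S → ℝ) → ℝ) : Prop :=
  φ 0 = 0 ∧
  (∀ f ∈ X, ∀ c : ℝ, φ (f + fun _ => c) = φ f + c) ∧
  (∀ f ∈ X, ∀ g ∈ X, (∀ x, f x ≤ g x) → φ f ≤ φ g)

/-- `φ` is max-stable on `X`. -/
def MaxStable {S : Type*} (X : Set (S → ℝ)) (φ : (S → ℝ) → ℝ) : Prop :=
  ∀ f ∈ X, ∀ g ∈ X, φ (f ⊔ g) ≤ max (φ f) (φ g)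

/-- The concentration function `J_A = inf_{r ∈ ℝ} φ(r · 1_{Aᶜ})`. -/
def conc {S : Type*} (φ : (S → ℝ) → ℝ) (A : Set S) : EReal :=
  ⨅ r : ℝ, (φ (Aᶜ.indicator fun _ => r) : EReal)

/-- The minimal rate function `I_min(x) = sup_{f ∈ C_b(S)} (f(x) - φ(f))`,
with values in `[0, +∞] ⊆ EReal`. -/
def IminE {S : Type*} [TopologicalSpace S] (φ : (S → ℝ) → ℝ) (x : S) : EReal :=
  ⨆ f : BoundedContinuousFunction S ℝ, ((f x - φ ⇑f : ℝ) : EReal)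

lemma indicator_mem_Bb {S : Type*} [MeasurableSpace S] {A : Set S} (hA : MeasurableSet A)
    (r : ℝ) : (A.indicator fun _ => r) ∈ Bb S := by
  refine ⟨measurable_const.indicator hA, |r|, fun x => ?_⟩
  by_cases hx : x ∈ A <;> simp [Set.indicator_apply, hx, le_abs_self, abs_nonneg]

theorem stmt12 {S : Type*} [MetricSpace S] [MeasurableSpace S] [BorelSpace S]
    (φ : (S → ℝ) → ℝ) (hmon : Monetary (Bb S) φ)
    (I : S → EReal) (hI0 : ∀ x, 0 ≤ I x)
    (hlsc : LowerSemicontinuous I) (hne : ∃ x, I x ≠ ⊤) :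
    ((∀ A : Set S, IsClosed A → conc φ A ≤ -(⨅ x ∈ A, I x)) →
      ∀ x, I x ≤ IminE φ x) ∧
    ((∀ A : Set S, IsOpen A → -(⨅ x ∈ A, I x) ≤ conc φ A) →
      ∀ x, IminE φ x ≤ I x) ∧
    ((∀ A : Set S, MeasurableSet A →
        -(⨅ x ∈ interior A, I x) ≤ conc φ A ∧
          conc φ A ≤ -(⨅ x ∈ closure A, I x)) →
      I = IminE φ) := by
  obtain ⟨-, htr, hmono⟩ := hmon
  have part1 : (∀ A : Set S, IsClosed A → conc φ A ≤ -(⨅ x ∈ A, I x)) →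
      ∀ x, I x ≤ IminE φ x := by
    intro h x
    rw [← EReal.ge_of_forall_gt_iff_ge]
    intro α hα
    rw [← EReal.ge_of_forall_gt_iff_ge]
    intro β hβ
    have hβα : β < α := EReal.coe_lt_coe_iff.1 hβ
    -- find a closed ball on which I > α
    obtain ⟨δ, hδpos, hδ⟩ := Metric.eventually_nhds_iff.1 (hlsc x _ hα)
    set A : Set S := closedBall x (δ / 2) with hAdef
    have hAclosed : IsClosed A := isClosed_closedBall
    have hinf : (α : EReal) ≤ ⨅ y ∈ A, I y := by
      refine le_iInf₂ fun y hy => (hδ ?_).le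
      calc dist y x ≤ δ / 2 := hy
        _ < δ := half_lt_self hδpos
    have hconc : conc φ A < ((-β : ℝ) : EReal) := by
      refine lt_of_le_of_lt (h A hAclosed) ?_
      rw [EReal.coe_neg]
      calc -(⨅ y ∈ A, I y) ≤ -(α : EReal) := EReal.neg_le_neg_iff.2 hinf
        _ < -(β : EReal) := by
          rw [EReal.neg_lt_neg_iff]; exact_mod_cast hβα
    obtain ⟨r, hr⟩ := iInf_lt_iff.1 hconc
    have hr' : φ (Aᶜ.indicator fun _ => r) < -β := EReal.coe_lt_coe_iff.1 hr
    set r' : ℝ := min r 0 with hr'def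
    have hr'0 : r' ≤ 0 := min_le_right r 0
    have hAm : MeasurableSet Aᶜ := hAclosed.measurableSet.compl
    have hmono' : φ (Aᶜ.indicator fun _ => r') ≤ φ (Aᶜ.indicator fun _ => r) := by
      refine hmono _ (indicator_mem_Bb hAm r') _ (indicator_mem_Bb hAm r) fun y => ?_
      by_cases hy : y ∈ Aᶜ <;> simp [Set.indicator_apply, hy, min_le_left r 0, hr'def]
    -- construct the bounded continuous function
    set g0 : S → ℝ := fun y => r' * min 1 (dist y x / (δ / 2)) with hg0def
    have hg0cont : Continuous g0 :=
      continuous_const.mul (continuous_const.min ((continuous_id.dist continuous_const).div_const _))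
    have hmin01 : ∀ y : S, 0 ≤ min 1 (dist y x / (δ / 2)) ∧ min 1 (dist y x / (δ / 2)) ≤ 1 :=
      fun y => ⟨le_min zero_le_one (div_nonneg dist_nonneg (by linarith)), min_le_left _ _⟩
    have hg0bd : ∀ y, ‖g0 y‖ ≤ |r'| := by
      intro y
      rw [hg0def, Real.norm_eq_abs, abs_mul]
      calc |r'| * |min 1 (dist y x / (δ / 2))| ≤ |r'| * 1 := by
            refine mul_le_mul_of_nonneg_left ?_ (abs_nonneg _)
            rw [abs_of_nonneg (hmin01 y).1]; exact (hmin01 y).2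
        _ = |r'| := mul_one _
    set f : BoundedContinuousFunction S ℝ :=
      BoundedContinuousFunction.ofNormedAddCommGroup g0 hg0cont |r'| hg0bd with hfdef
    have hfcoe : ⇑f = g0 := rfl
    have hfle : ∀ y, f y ≤ (Aᶜ.indicator fun _ => r') y := by
      intro y
      rw [hfcoe]
      by_cases hy : y ∈ A
      · have : y ∉ Aᶜ := fun h' => h' hy
        rw [Set.indicator_of_notMem this]
        exact mul_nonpos_of_nonpos_of_nonneg hr'0 (hmin01 y).1
      · have hy' : y ∈ Aᶜ := hy
        rw [Set.indicator_of_mem hy']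
        have hd : δ / 2 < dist y x := by
          by_contra hc
          exact hy (by simpa [hAdef, mem_closedBall] using not_lt.1 hc)
        have : min 1 (dist y x / (δ / 2)) = 1 :=
          min_eq_left ((one_le_div (by linarith)).2 (by linarith [hd]))
        rw [hg0def]
        simp [this]
    have hfBb : ⇑f ∈ Bb S := ⟨hg0cont.measurable, |r'|, fun y => hg0bd y⟩
    have hφf : φ ⇑f ≤ φ (Aᶜ.indicator fun _ => r') :=
      hmono _ hfBb _ (indicator_mem_Bb hAm r') hfle
    have hfx : f x = 0 := by
      rw [hfcoe, hg0def]; simp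
    have : (β : ℝ) ≤ f x - φ ⇑f := by
      rw [hfx]
      have : φ ⇑f < -β := lt_of_le_of_lt (hφf.trans hmono') hr'
      linarith
    calc (β : EReal) ≤ ((f x - φ ⇑f : ℝ) : EReal) := EReal.coe_le_coe_iff.2 this
      _ ≤ IminE φ x := le_iSup (fun g : BoundedContinuousFunction S ℝ =>
          ((g x - φ ⇑g : ℝ) : EReal)) f
  have part2 : (∀ A : Set S, IsOpen A → -(⨅ x ∈ A, I x) ≤ conc φ A) →
      ∀ x, IminE φ x ≤ I x := by
    intro h x
    refine iSup_le fun f => ?_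
    rw [← EReal.ge_of_forall_gt_iff_ge]
    intro z hz
    have hz' : z < f x - φ ⇑f := EReal.coe_lt_coe_iff.1 hz
    obtain ⟨ε, hεpos, hεdef⟩ : ∃ ε : ℝ, 0 < ε ∧ ε = f x - φ ⇑f - z :=
      ⟨f x - φ ⇑f - z, by linarith, rfl⟩
    set A : Set S := ⇑f ⁻¹' Ioi (f x - ε) with hAdef
    have hAopen : IsOpen A := IsOpen.preimage f.continuous isOpen_Ioi
    have hxA : x ∈ A := by simp [hAdef, hεpos]
    obtain ⟨r, hrdef⟩ : ∃ r : ℝ, r = -‖f‖ - f x := ⟨_, rfl⟩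
    have hAm : MeasurableSet Aᶜ := hAopen.measurableSet.compl
    have hgBb : (Aᶜ.indicator fun _ => r) ∈ Bb S := indicator_mem_Bb hAm r
    have hgabs : ∀ y, |(Aᶜ.indicator fun _ => r) y| ≤ |r| := by
      intro y
      by_cases hy : y ∈ Aᶜ <;> simp [Set.indicator_apply, hy, le_abs_self, abs_nonneg]
    have hsumBb : ((Aᶜ.indicator fun _ => r) + fun _ => f x - ε) ∈ Bb S := by
      refine ⟨hgBb.1.add measurable_const, |r| + |f x - ε|, fun y => ?_⟩
      calc |(Aᶜ.indicator fun _ => r) y + (f x - ε)|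
          ≤ |(Aᶜ.indicator fun _ => r) y| + |f x - ε| := abs_add_le _ _
        _ ≤ |r| + |f x - ε| := by linarith [hgabs y]
    have hfBb : ⇑f ∈ Bb S := ⟨f.continuous.measurable, ‖f‖, fun y => f.norm_coe_le_norm y⟩
    have hle : ∀ y, ((Aᶜ.indicator fun _ => r) + fun _ : S => f x - ε) y ≤ f y := by
      intro y
      simp only [Pi.add_apply]
      by_cases hy : y ∈ A
      · have hny : y ∉ Aᶜ := fun h' => h' hy
        have hfy : f x - ε < f y := hy
        rw [Set.indicator_of_notMem hny]
        linarith
      · have hy' : y ∈ Aᶜ := hy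
        have hfy : -‖f‖ ≤ f y := f.neg_norm_le_apply y
        rw [Set.indicator_of_mem hy']
        linarith [hrdef.le, hrdef.ge]
    have hφ : φ (Aᶜ.indicator fun _ => r) + (f x - ε) ≤ φ ⇑f := by
      rw [← htr _ hgBb (f x - ε)]
      exact hmono _ hsumBb _ hfBb hle
    have hφg : φ (Aᶜ.indicator fun _ => r) ≤ -z := by linarith
    have hconc : conc φ A ≤ ((-z : ℝ) : EReal) :=
      le_trans (iInf_le _ r) (EReal.coe_le_coe_iff.2 hφg)
    have hneg : -(⨅ y ∈ A, I y) ≤ -(z : EReal) := by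
      refine le_trans (h A hAopen) ?_
      rwa [EReal.coe_neg] at hconc
    have hzle : (z : EReal) ≤ ⨅ y ∈ A, I y := by
      rw [← EReal.neg_le_neg_iff]; exact hneg
    exact hzle.trans (iInf₂_le x hxA)
  refine ⟨part1, part2, fun h => ?_⟩
  funext x
  refine le_antisymm ?_ ?_
  · refine part1 (fun A hA => ?_) x
    have := (h A hA.measurableSet).2
    rwa [hA.closure_eq] at this
  · refine part2 (fun A hA => ?_) x
    have := (h A hA.measurableSet).1
    rwa [hA.interior_eq] at this
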